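/- For every positive integer N and complex z in a compact set, e^{−(√N + z)²} · (√(2N) + √2 z)^{2N} / (2N−1)!! = (e^{−2z²}/√2) · (1 + o(1)) as N → ∞; equivalently, lim_{N→∞} √2 · e^{−(√N+z)²} (√(2N)+√2 z)^{2N} / (2N−1)!! = e^{−2z²}. -/

import Mathlib

open Filter

/-- The double factorial of odd numbers, `(2N-1)!! = (2N)! / (2^N N!)`, as a real number. -/
noncomputable def oddDoubleFactorial (N : ℕ) : ℝ :=
  (Nat.factorial (2 * N) : ℝ) / ((2 : ℝ) ^ N * (Nat.factorial N : ℝ))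

noncomputable def cSeq (N : ℕ) : ℝ := Stirling.stirlingSeq N / Stirling.stirlingSeq (2 * N)

lemma cSeq_tendsto : Tendsto cSeq atTop (nhds 1) := by
  have h2 : Tendsto (fun N : ℕ => 2 * N) atTop atTop :=
    tendsto_atTop_mono (fun n => Nat.le_mul_of_pos_left n two_pos) tendsto_id
  have := (Stirling.tendsto_stirlingSeq_sqrt_pi).div
    (Stirling.tendsto_stirlingSeq_sqrt_pi.comp h2)
    (ne_of_gt (Real.sqrt_pos.mpr Real.pi_pos))
  rw [div_self (ne_of_gt (Real.sqrt_pos.mpr Real.pi_pos))] at this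
  exact this

lemma c_eq (N : ℕ) (hN : 1 ≤ N) :
    cSeq N = Real.sqrt 2 * 4 ^ N * (N : ℝ) ^ N * Real.exp (-(N : ℝ)) *
      (Nat.factorial N) / (Nat.factorial (2 * N)) := by
  have hNR : (0:ℝ) < (N:ℝ) := by exact_mod_cast hN
  have hs : (0:ℝ) < Real.sqrt N := Real.sqrt_pos.mpr hNR
  have h1 : Real.sqrt (2 * (N:ℝ)) = Real.sqrt 2 * Real.sqrt N :=
    Real.sqrt_mul (by norm_num) _
  have h2 : Real.sqrt (2 * ((2*N : ℕ):ℝ)) = 2 * Real.sqrt N := by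
    push_cast
    rw [show (2:ℝ) * (2 * N) = 4 * N by ring, Real.sqrt_mul (by norm_num)]
    norm_num [Real.sqrt_eq_iff_eq_sq]
  have h3 : Real.exp (-(N:ℝ)) * Real.exp 1 ^ N = 1 := by
    rw [← Real.exp_nat_mul, mul_one, ← Real.exp_add]; simp
  have hfac1 : ((Nat.factorial N : ℝ)) ≠ 0 := by positivity
  have hfac2 : ((Nat.factorial (2*N) : ℝ)) ≠ 0 := by positivity
  have hE : Real.exp 1 ≠ 0 := Real.exp_ne_zero 1
  unfold cSeq Stirling.stirlingSeq
  rw [h1, h2]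
  push_cast
  field_simp
  ring_nf
  rw [Real.sq_sqrt (by norm_num : (0:ℝ) ≤ 2),
    show ((2:ℝ))^(N*2) = 4^N by rw [mul_comm, pow_mul]; norm_num]
  have h4 : Real.exp (-(N:ℝ)) * Real.exp ((N:ℝ)*2) = Real.exp ((N:ℝ)) := by
    rw [← Real.exp_add]; ring_nf
  have h5 : Real.exp (-(N:ℝ)) = (Real.exp 1)⁻¹ ^ N := by
    rw [← Real.exp_neg, ← Real.exp_nat_mul]; congr 1; ring
  linear_combination (-(N:ℝ)^(N*2) * (Real.exp 1)⁻¹ ^ N * 4^N * 2) * h5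

lemma key_id (N : ℕ) (hN : 1 ≤ N) (z : ℂ) :
    (Real.sqrt 2 : ℂ) * Complex.exp (-((Real.sqrt N : ℂ) + z) ^ 2) *
      ((Real.sqrt (2 * N) : ℂ) + (Real.sqrt 2 : ℂ) * z) ^ (2 * N) / (oddDoubleFactorial N : ℂ)
    = (cSeq N : ℂ) * (Complex.exp (-z ^ 2) *
        (Complex.exp (-2 * (Real.sqrt N : ℂ) * z) * (1 + z / (Real.sqrt N : ℂ)) ^ (2 * N))) := by
  have hNR : (0:ℝ) < (N:ℝ) := by exact_mod_cast hN
  set s : ℂ := ((Real.sqrt N : ℝ) : ℂ) with hs_def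
  have hs2 : s ^ 2 = (N : ℂ) := by
    rw [hs_def, ← Complex.ofReal_pow, Real.sq_sqrt hNR.le]
    norm_cast
  have hsne : s ≠ 0 := by
    rw [hs_def]
    exact_mod_cast (Real.sqrt_pos.mpr hNR).ne'
  have hsq2 : ((Real.sqrt 2 : ℝ) : ℂ) ^ 2 = 2 := by
    rw [← Complex.ofReal_pow, Real.sq_sqrt (by norm_num : (0:ℝ) ≤ 2)]
    norm_num
  have h2N : ((Real.sqrt (2 * (N:ℝ)) : ℝ) : ℂ) = (Real.sqrt 2 : ℂ) * s := by
    rw [Real.sqrt_mul (by norm_num) (N:ℝ)]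
    push_cast
    rfl
  have hexp : Complex.exp (-(s + z) ^ 2) =
      Complex.exp (-(N : ℂ)) * Complex.exp (-2 * s * z) * Complex.exp (-z ^ 2) := by
    rw [← Complex.exp_add, ← Complex.exp_add]
    congr 1
    linear_combination -hs2
  have hsplit : (s + z) = s * (1 + z / s) := by field_simp
  have hpow : ((Real.sqrt 2 : ℂ) * s + (Real.sqrt 2 : ℂ) * z) ^ (2 * N)
      = (2 : ℂ) ^ N * ((N : ℂ) ^ N * (1 + z / s) ^ (2 * N)) := by
    rw [show (Real.sqrt 2 : ℂ) * s + (Real.sqrt 2 : ℂ) * z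
        = (Real.sqrt 2 : ℂ) * (s * (1 + z / s)) by rw [← hsplit]; ring,
      mul_pow, mul_pow, pow_mul, hsq2, pow_mul, hs2]
  have hfac1 : ((Nat.factorial N : ℝ) : ℂ) ≠ 0 := by
    exact_mod_cast Nat.cast_ne_zero.mpr (Nat.factorial_ne_zero N)
  have hfac2 : ((Nat.factorial (2 * N) : ℝ) : ℂ) ≠ 0 := by
    exact_mod_cast Nat.cast_ne_zero.mpr (Nat.factorial_ne_zero (2*N))
  have hodd : ((oddDoubleFactorial N : ℝ) : ℂ)
      = ((Nat.factorial (2 * N) : ℕ) : ℂ) / ((2 : ℂ) ^ N * ((Nat.factorial N : ℕ) : ℂ)) := by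
    unfold oddDoubleFactorial
    push_cast
    rfl
  rw [h2N, hexp, hpow, c_eq N hN, hodd]
  push_cast
  field_simp
  ring_nf
  rw [show ((2:ℂ)) ^ (N * 2) = 4 ^ N by rw [mul_comm, pow_mul]; norm_num]

lemma logTaylor_three (w : ℂ) : Complex.logTaylor 3 w = w - w ^ 2 / 2 := by
  simp [Complex.logTaylor_succ, Complex.logTaylor_zero]
  ring

theorem stmt15 (K : Set ℂ) (hK : IsCompact K) :
    TendstoUniformlyOn
      (fun (N : ℕ) (z : ℂ) =>
        (Real.sqrt 2 : ℂ) * Complex.exp (-((Real.sqrt N : ℂ) + z) ^ 2) *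
          ((Real.sqrt (2 * N) : ℂ) + (Real.sqrt 2 : ℂ) * z) ^ (2 * N) /
            (oddDoubleFactorial N : ℂ))
      (fun z => Complex.exp (-2 * z ^ 2)) atTop K := by
  obtain ⟨R₀, hR₀⟩ := hK.isBounded.exists_norm_le
  set R : ℝ := max R₀ 0 with hRdef
  have hR0 : 0 ≤ R := le_max_right _ _
  have hzR : ∀ z ∈ K, ‖z‖ ≤ R := fun z hz => (hR₀ z hz).trans (le_max_left _ _)
  set A : ℝ := Real.exp (R ^ 2) with hAdef
  have hA0 : 0 < A := Real.exp_pos _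
  set δ : ℕ → ℝ := fun N => 4 / 3 * R ^ 3 / Real.sqrt N with hδdef
  have hδnn : ∀ N, 0 ≤ δ N := fun N => by
    rw [hδdef]; positivity
  have hsqrt : Tendsto Real.sqrt atTop atTop := by
    rw [tendsto_atTop_atTop]
    intro c
    refine ⟨max (c ^ 2) 0, fun a ha => ?_⟩
    have h0 : (0:ℝ) ≤ a := le_trans (le_max_right _ _) ha
    have hc2 : c ^ 2 ≤ a := le_trans (le_max_left _ _) ha
    rcases le_or_gt c 0 with hc | hc
    · exact hc.trans (Real.sqrt_nonneg a)
    · exact (Real.le_sqrt' hc).mpr hc2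
  have hsqrtN : Tendsto (fun N : ℕ => Real.sqrt N) atTop atTop :=
    hsqrt.comp tendsto_natCast_atTop_atTop
  have hδ0 : Tendsto δ atTop (nhds 0) := by
    rw [hδdef]
    simp only [div_eq_mul_inv]
    simpa using (hsqrtN.inv_tendsto_atTop).const_mul (4 * 3⁻¹ * R ^ 3)
  set b : ℕ → ℝ := fun N => A * (|cSeq N| * (A * (2 * δ N)) + |cSeq N - 1| * A) with hbdef
  have hb0 : Tendsto b atTop (nhds 0) := by
    have h1 : Tendsto (fun N => |cSeq N|) atTop (nhds 1) := by
      simpa using cSeq_tendsto.abs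
    have h2 : Tendsto (fun N => |cSeq N - 1|) atTop (nhds 0) := by
      simpa using (cSeq_tendsto.sub_const 1).abs
    have := ((h1.mul ((hδ0.const_mul 2).const_mul A)).add (h2.mul (tendsto_const_nhds (x := A)))).const_mul A
    simpa using this
  rw [Metric.tendstoUniformlyOn_iff]
  intro ε hε
  filter_upwards [eventually_ge_atTop 1, hsqrtN.eventually_ge_atTop (2 * R),
    hδ0.eventually_lt_const one_pos, hb0.eventually_lt_const hε] with N hN1 hNR hδ1 hbε z hzK
  have hz : ‖z‖ ≤ R := hzR z hzK
  have hNR' : (0:ℝ) < (N:ℝ) := by exact_mod_cast hN1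
  have hsp : (0:ℝ) < Real.sqrt N := Real.sqrt_pos.mpr hNR'
  set s : ℂ := ((Real.sqrt N : ℝ) : ℂ) with hs_def
  have hs2 : s ^ 2 = (N : ℂ) := by
    rw [hs_def, ← Complex.ofReal_pow, Real.sq_sqrt hNR'.le]
    norm_cast
  have hsne : s ≠ 0 := by
    rw [hs_def]
    exact_mod_cast hsp.ne'
  have hsnorm : ‖s‖ = Real.sqrt N := by
    rw [hs_def, Complex.norm_real, Real.norm_eq_abs, abs_of_pos hsp]
  set w : ℂ := z / s with hw_def
  have hwnorm : ‖w‖ ≤ 1 / 2 := by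
    rw [hw_def, norm_div, hsnorm, div_le_iff₀ hsp]
    nlinarith
  have hw1 : ‖w‖ < 1 := lt_of_le_of_lt hwnorm (by norm_num)
  have h1w : (1 : ℂ) + w ≠ 0 := by
    intro h
    have hwm : w = -1 := by linear_combination h
    rw [hwm] at hwnorm
    norm_num at hwnorm
  set L : ℂ := Complex.log (1 + w) with hL_def
  have htaylor : ‖L - (w - w ^ 2 / 2)‖ ≤ 2 / 3 * ‖w‖ ^ 3 := by
    have h := Complex.norm_log_sub_logTaylor_le 2 hw1
    rw [show (2:ℕ) + 1 = 3 from rfl, logTaylor_three] at h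
    have hinv : (1 - ‖w‖)⁻¹ ≤ 2 := by
      have h12 : (1:ℝ) / 2 ≤ 1 - ‖w‖ := by linarith
      calc (1 - ‖w‖)⁻¹ ≤ ((1:ℝ)/2)⁻¹ := by
            apply inv_anti₀ (by norm_num) h12
        _ = 2 := by norm_num
    calc ‖L - (w - w ^ 2 / 2)‖ ≤ ‖w‖ ^ (2 + 1) * (1 - ‖w‖)⁻¹ / (2 + 1) := h
      _ ≤ 2 / 3 * ‖w‖ ^ 3 := by
          rw [show (2:ℕ) + 1 = 3 from rfl]
          push_cast
          nlinarith [pow_nonneg (norm_nonneg w) 3]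
  set E : ℂ := ((2 * N : ℕ) : ℂ) * L - 2 * s * z with hE_def
  have hNw : (N : ℂ) * w = s * z := by
    rw [hw_def, ← mul_div_assoc, div_eq_iff hsne]
    linear_combination -z * hs2
  have hNw2 : (N : ℂ) * w ^ 2 = z ^ 2 := by
    rw [hw_def, div_pow, ← mul_div_assoc, div_eq_iff (pow_ne_zero 2 hsne)]
    linear_combination -z ^ 2 * hs2
  have hEz : E + z ^ 2 = ((2 * N : ℕ) : ℂ) * (L - (w - w ^ 2 / 2)) := by
    rw [hE_def]
    push_cast
    linear_combination 2 * hNw - hNw2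
  have hwn : ‖w‖ = ‖z‖ / Real.sqrt N := by rw [hw_def, norm_div, hsnorm]
  have hsq : Real.sqrt N ^ 2 = (N:ℝ) := Real.sq_sqrt hNR'.le
  have hEznorm : ‖E + z ^ 2‖ ≤ δ N := by
    rw [hEz, norm_mul]
    have hn2N : ‖((2 * N : ℕ) : ℂ)‖ = 2 * (N:ℝ) := by
      rw [Complex.norm_natCast]; push_cast; ring
    rw [hn2N]
    calc 2 * (N:ℝ) * ‖L - (w - w ^ 2 / 2)‖ ≤ 2 * (N:ℝ) * (2 / 3 * ‖w‖ ^ 3) := by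
          apply mul_le_mul_of_nonneg_left htaylor (by positivity)
      _ = 4 / 3 * ‖z‖ ^ 3 / Real.sqrt N := by
          rw [hwn, div_pow, show Real.sqrt N ^ 3 = (N:ℝ) * Real.sqrt N by
            rw [pow_succ, hsq]]
          field_simp
          ring
      _ ≤ δ N := by
          simp only [hδdef]
          gcongr
  have hEδ : ‖E + z ^ 2‖ ≤ 1 := hEznorm.trans hδ1.le
  have hexpL : Complex.exp L = 1 + w := Complex.exp_log h1w
  have hpowE : (1 + w) ^ (2 * N) = Complex.exp (((2 * N : ℕ) : ℂ) * L) := by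
    rw [Complex.exp_nat_mul, hexpL]
  have hGE : Complex.exp (-2 * s * z) * (1 + w) ^ (2 * N) = Complex.exp E := by
    rw [hpowE, ← Complex.exp_add, hE_def]
    congr 1
    ring
  have hz2 : ‖Complex.exp (-z ^ 2)‖ ≤ A := by
    rw [Complex.norm_exp, hAdef]
    apply Real.exp_le_exp.mpr
    calc (-z ^ 2).re ≤ ‖-z ^ 2‖ := Complex.re_le_norm _
      _ = ‖z‖ ^ 2 := by rw [norm_neg, norm_pow]
      _ ≤ R ^ 2 := by nlinarith [norm_nonneg z]
  have hgnorm : ‖Complex.exp (-2 * s * z) * (1 + w) ^ (2 * N) - Complex.exp (-z ^ 2)‖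
      ≤ A * (2 * δ N) := by
    rw [hGE, show Complex.exp E - Complex.exp (-z ^ 2)
        = Complex.exp (-z ^ 2) * (Complex.exp (E + z ^ 2) - 1) by
      rw [mul_sub, ← Complex.exp_add, mul_one]; ring_nf, norm_mul]
    have h1 : ‖Complex.exp (E + z ^ 2) - 1‖ ≤ 2 * δ N := by
      calc ‖Complex.exp (E + z ^ 2) - 1‖ ≤ 2 * ‖E + z ^ 2‖ :=
            Complex.norm_exp_sub_one_le hEδ
        _ ≤ 2 * δ N := by linarith
    exact mul_le_mul hz2 h1 (norm_nonneg _) hA0.le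
  rw [dist_eq_norm', key_id N hN1 z]
  have hcnorm : ‖((cSeq N : ℝ) : ℂ)‖ = |cSeq N| := by rw [Complex.norm_real, Real.norm_eq_abs]
  have hc1norm : ‖((cSeq N : ℝ) : ℂ) - 1‖ = |cSeq N - 1| := by
    rw [show ((cSeq N : ℝ) : ℂ) - 1 = ((cSeq N - 1 : ℝ) : ℂ) by push_cast; ring,
      Complex.norm_real, Real.norm_eq_abs]
  set G : ℂ := Complex.exp (-2 * s * z) * (1 + w) ^ (2 * N) with hG_def
  set e₁ : ℂ := Complex.exp (-z ^ 2) with he_def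
  have hsplit2 : ((cSeq N : ℝ) : ℂ) * (e₁ * G) - Complex.exp (-2 * z ^ 2)
      = e₁ * (((cSeq N : ℝ) : ℂ) * (G - e₁) + (((cSeq N : ℝ) : ℂ) - 1) * e₁) := by
    rw [show Complex.exp (-2 * z ^ 2) = e₁ * e₁ by
      rw [he_def, ← Complex.exp_add]; ring_nf]
    ring
  calc ‖((cSeq N : ℝ) : ℂ) * (e₁ * G) - Complex.exp (-2 * z ^ 2)‖
      = ‖e₁‖ * ‖((cSeq N : ℝ) : ℂ) * (G - e₁) + (((cSeq N : ℝ) : ℂ) - 1) * e₁‖ := by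
        rw [hsplit2, norm_mul]
    _ ≤ A * (|cSeq N| * (A * (2 * δ N)) + |cSeq N - 1| * A) := by
        apply mul_le_mul hz2 ?_ (norm_nonneg _) hA0.le
        calc ‖((cSeq N : ℝ) : ℂ) * (G - e₁) + (((cSeq N : ℝ) : ℂ) - 1) * e₁‖
            ≤ ‖((cSeq N : ℝ) : ℂ)‖ * ‖G - e₁‖ + ‖((cSeq N : ℝ) : ℂ) - 1‖ * ‖e₁‖ := by
              refine (norm_add_le _ _).trans ?_
              rw [norm_mul, norm_mul]
          _ ≤ |cSeq N| * (A * (2 * δ N)) + |cSeq N - 1| * A := by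
              rw [hcnorm, hc1norm]
              exact add_le_add (mul_le_mul_of_nonneg_left hgnorm (abs_nonneg _))
                (mul_le_mul_of_nonneg_left hz2 (abs_nonneg _))
    _ = b N := rfl
    _ < ε := hbε
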